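/- arXiv:1003.0415 — 8 statements merged into one kernel-verified Lean document; each statement's English description precedes it below -/
import Mathlib

section
/- Let Φ be an m×N complex matrix with unit-norm columns and coherence μ > 0. Let S be a set of column indices with |S| < (1/2)(1/μ + 1), and let u = Φx for a vector x ∈ ℂ^N with support contained in S. Then x is the unique sparsest representation of u: every vector z ∈ ℂ^N with z ≠ x and Φz = u satisfies |supp(z)| > |supp(x)|. -/
noncomputable section

open Matrix MeasureTheory Finset

namespace SparsityGap

variable {m N : ℕ}

/-- The `j`-th column of the dictionary `Φ`. -/
def col (Φ : Matrix (Fin m) (Fin N) ℂ) (j : Fin N) : Fin m → ℂ := fun i => Φ i j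

/-- The column submatrix `Φ_S` of `Φ` with columns listed in `S`. -/
def sub (Φ : Matrix (Fin m) (Fin N) ℂ) (S : Finset (Fin N)) :
    Matrix (Fin m) {j // j ∈ S} ℂ :=
  Φ.submatrix id (fun j => (j : Fin N))

/-- `range (Φ_S)`: the span of the columns of `Φ` indexed by `S`. -/
def colSpan (Φ : Matrix (Fin m) (Fin N) ℂ) (S : Finset (Fin N)) :
    Submodule ℂ (Fin m → ℂ) :=
  Submodule.span ℂ (Set.range fun j : {j // j ∈ S} => col Φ j)

/-- `S` indexes a linearly independent family of columns of `Φ`. -/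
def LinIndepOn (Φ : Matrix (Fin m) (Fin N) ℂ) (S : Finset (Fin N)) : Prop :=
  LinearIndependent ℂ (fun j : {j // j ∈ S} => col Φ j)

/-- Each column of `Φ` has unit Euclidean norm. -/
def UnitColumns (Φ : Matrix (Fin m) (Fin N) ℂ) : Prop :=
  ∀ j, ∑ i, ‖Φ i j‖ ^ 2 = 1

/-- The coherence of `Φ` (the maximal inner product between distinct columns)
is at most `μ`. -/
def CoherenceLE (Φ : Matrix (Fin m) (Fin N) ℂ) (μ : ℝ) : Prop :=
  ∀ j k, j ≠ k → ‖∑ i, star (Φ i j) * Φ i k‖ ≤ μ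

/-- The ℓ₂ → ℓ₂ operator (spectral) norm of a matrix. -/
def opNorm {α β : Type*} [Fintype α] [Fintype β] [DecidableEq β]
    (A : Matrix α β ℂ) : ℝ :=
  ‖LinearMap.toContinuousLinearMap (Matrix.toEuclideanLin A)‖

/-- The Euclidean norm of a finitely supported vector. -/
def enorm {α : Type*} [Fintype α] (w : α → ℂ) : ℝ :=
  Real.sqrt (∑ j, ‖w j‖ ^ 2)

end SparsityGap
namespace SparsityGap

/-- If the coherence bound forces strict diagonal dominance of the Gram matrix on `T`,
then any kernel vector supported in `T` vanishes. -/
lemma kernel_eq_zero {m N : ℕ} (Φ : Matrix (Fin m) (Fin N) ℂ) (μ : ℝ)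
    (hcol : UnitColumns Φ) (hcoh : CoherenceLE Φ μ)
    (T : Finset (Fin N)) (hT : μ * ((T.card : ℝ) - 1) < 1)
    (w : Fin N → ℂ) (hs : ∀ k, k ∉ T → w k = 0)
    (hker : Φ.mulVec w = 0) : w = 0 := by
  by_contra hw
  obtain ⟨j0, hj0⟩ := Function.ne_iff.mp hw
  obtain ⟨j, -, hj⟩ := Finset.exists_max_image Finset.univ (fun k => ‖w k‖)
    ⟨j0, Finset.mem_univ j0⟩
  have hwj : 0 < ‖w j‖ :=
    lt_of_lt_of_le (norm_pos_iff.mpr hj0) (hj j0 (Finset.mem_univ _))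
  have hjT : j ∈ T := by
    by_contra h
    rw [hs j h, norm_zero] at hwj
    exact lt_irrefl 0 hwj
  -- Gram matrix entries
  set G : Fin N → Fin N → ℂ := fun a b => ∑ i, star (Φ i a) * Φ i b with hG
  have key : ∑ k, G j k * w k = 0 := by
    have h0 : ∑ i, star (Φ i j) * (Φ.mulVec w) i = 0 := by
      rw [hker]; simp
    rw [← h0]
    simp only [Matrix.mulVec, dotProduct, Finset.mul_sum]
    rw [Finset.sum_comm]
    refine Finset.sum_congr rfl fun k _ => ?_
    rw [hG]
    simp only [Finset.sum_mul]
    refine Finset.sum_congr rfl fun i _ => ?_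
    ring
  have hGjj : G j j = 1 := by
    rw [hG]
    have : ∀ i, star (Φ i j) * Φ i j = ((‖Φ i j‖ ^ 2 : ℝ) : ℂ) := by
      intro i
      rw [Complex.star_def, RCLike.conj_mul]
      norm_cast
    simp only [this]
    rw [← Complex.ofReal_sum, hcol j]
    norm_num
  have key2 : w j = -∑ k ∈ Finset.univ.erase j, G j k * w k := by
    have := Finset.add_sum_erase Finset.univ (fun k => G j k * w k) (Finset.mem_univ j)
    rw [key] at this
    simp only [hGjj, one_mul] at this
    linear_combination this
  have hbound : ‖w j‖ ≤ μ * ((T.card : ℝ) - 1) * ‖w j‖ := by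
    calc ‖w j‖ = ‖∑ k ∈ Finset.univ.erase j, G j k * w k‖ := by rw [key2, norm_neg]
      _ ≤ ∑ k ∈ Finset.univ.erase j, ‖G j k * w k‖ := norm_sum_le _ _
      _ = ∑ k ∈ T.erase j, ‖G j k * w k‖ := by
          refine (Finset.sum_subset ?_ ?_).symm
          · exact Finset.erase_subset_erase _ (Finset.subset_univ T)
          · intro k hk hkT
            have hkj : k ≠ j := (Finset.mem_erase.mp hk).1
            have hknT : k ∉ T := fun h => hkT (Finset.mem_erase.mpr ⟨hkj, h⟩)
            rw [hs k hknT, mul_zero, norm_zero]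
      _ ≤ ∑ _k ∈ T.erase j, μ * ‖w j‖ := by
          refine Finset.sum_le_sum fun k hk => ?_
          rw [norm_mul]
          have h1 : ‖G j k‖ ≤ μ := hcoh j k (Ne.symm (Finset.mem_erase.mp hk).1)
          have h2 : ‖w k‖ ≤ ‖w j‖ := hj k (Finset.mem_univ _)
          exact mul_le_mul h1 h2 (norm_nonneg _) (le_trans (norm_nonneg _) h1)
      _ = ((T.erase j).card : ℝ) * (μ * ‖w j‖) := by rw [Finset.sum_const, nsmul_eq_mul]
      _ = μ * ((T.card : ℝ) - 1) * ‖w j‖ := by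
          rw [Finset.card_erase_of_mem hjT]
          have h1 : 1 ≤ T.card := Finset.card_pos.mpr ⟨j, hjT⟩
          push_cast [h1]
          ring
  have : μ * ((T.card : ℝ) - 1) * ‖w j‖ < 1 * ‖w j‖ :=
    mul_lt_mul_of_pos_right hT hwj
  rw [one_mul] at this
  exact absurd (lt_of_le_of_lt hbound this) (lt_irrefl _)

/-- Proposition 1, uniqueness of sparse representations.
If `Φ` has unit-norm columns and coherence at most `μ > 0`, if
`|S| < (1/2)(μ⁻¹ + 1)`, and if `u = Φ x` with `supp x ⊆ S`, then every other
representation `z` of `u` is strictly less sparse. -/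
theorem sparse_representation_unique {m N : ℕ} (Φ : Matrix (Fin m) (Fin N) ℂ)
    (μ : ℝ) (hμ : 0 < μ) (hcol : UnitColumns Φ) (hcoh : CoherenceLE Φ μ)
    (S : Finset (Fin N)) (hScard : (S.card : ℝ) < (1 / μ + 1) / 2)
    (x : Fin N → ℂ) (hsupp : Function.support x ⊆ (S : Set (Fin N)))
    (z : Fin N → ℂ) (hz : z ≠ x) (hrep : Φ.mulVec z = Φ.mulVec x) :
    (Function.support x).ncard < (Function.support z).ncard := by
  classical
  by_contra hle
  push_neg at hle
  set w : Fin N → ℂ := z - x with hw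
  have hwne : w ≠ 0 := fun h => hz (by rwa [hw, sub_eq_zero] at h)
  set T : Finset (Fin N) := (Function.support z ∪ Function.support x).toFinset with hTdef
  have hsuppT : ∀ k, k ∉ T → w k = 0 := by
    intro k hk
    rw [hTdef] at hk
    simp only [Set.mem_toFinset, Set.mem_union, Function.mem_support, not_or,
      not_not] at hk
    simp [hw, hk.1, hk.2]
  have hker : Φ.mulVec w = 0 := by
    rw [hw, Matrix.mulVec_sub, hrep, sub_self]
  -- cardinality bound
  have hx_le_S : (Function.support x).ncard ≤ S.card := by
    have : (Function.support x).ncard ≤ (S : Set (Fin N)).ncard :=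
      Set.ncard_le_ncard hsupp (S : Set (Fin N)).toFinite
    rwa [Set.ncard_coe_finset] at this
  have hTcard : (T.card : ℝ) ≤ 2 * S.card := by
    have h1 : T.card = (Function.support z ∪ Function.support x).ncard :=
      (Set.ncard_eq_toFinset_card' _).symm
    have h2 : (Function.support z ∪ Function.support x).ncard ≤
        (Function.support z).ncard + (Function.support x).ncard :=
      Set.ncard_union_le _ _
    have h3 : T.card ≤ 2 * (Function.support x).ncard := by
      rw [h1]; omega
    have h4 : T.card ≤ 2 * S.card := le_trans h3 (by omega)
    exact_mod_cast h4
  have hT : μ * ((T.card : ℝ) - 1) < 1 := by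
    have h5 : (T.card : ℝ) < 1 / μ + 1 := by
      calc (T.card : ℝ) ≤ 2 * S.card := hTcard
        _ < 2 * ((1 / μ + 1) / 2) := by linarith
        _ = 1 / μ + 1 := by ring
    have h6 : (T.card : ℝ) - 1 < 1 / μ := by linarith
    calc μ * ((T.card : ℝ) - 1) < μ * (1 / μ) := by
          exact mul_lt_mul_of_pos_left h6 hμ
      _ = 1 := by field_simp
  exact hwne (kernel_eq_zero Φ μ hcol hcoh T hT w hsuppT hker)

end SparsityGap
end
end

section
/- Let Φ be an m×N complex matrix with unit-norm columns and coherence μ > 0. If two distinct vectors x, y ∈ ℂ^N satisfy Φx = Φy, then |supp(x)| + |supp(y)| > 1/μ. In particular, if a signal has two different representations, one supported on S and one supported on T, then |S| + |T| > 1/μ. -/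
noncomputable section

open Matrix MeasureTheory Finset

namespace SparsityGap

/-- Donoho–Elad dictionary uncertainty principle.
If `Φ` has unit-norm columns and coherence at most `μ > 0`, and two distinct
vectors `x, y` represent the same signal, then `|supp x| + |supp y| > μ⁻¹`. -/
theorem dictionary_uncertainty_principle {m N : ℕ} (Φ : Matrix (Fin m) (Fin N) ℂ)
    (μ : ℝ) (hμ : 0 < μ) (hcol : UnitColumns Φ) (hcoh : CoherenceLE Φ μ)
    (x y : Fin N → ℂ) (hxy : x ≠ y) (hrep : Φ.mulVec x = Φ.mulVec y) :
    1 / μ < ((Function.support x).ncard : ℝ) + (Function.support y).ncard := by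
  classical
  set z : Fin N → ℂ := x - y with hzdef
  have hz : z ≠ 0 := sub_ne_zero.mpr hxy
  have hΦz : Φ.mulVec z = 0 := by
    rw [hzdef, Matrix.mulVec_sub, hrep, sub_self]
  set t : Finset (Fin N) := Finset.univ.filter (fun k => z k ≠ 0) with htdef
  have ht : t.Nonempty := by
    obtain ⟨j, hj⟩ := Function.ne_iff.mp hz
    exact ⟨j, by simp only [htdef, Finset.mem_filter, Finset.mem_univ, true_and]; simpa using hj⟩
  obtain ⟨j, hjt, hjmax⟩ := t.exists_max_image (fun k => ‖z k‖) ht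
  have hzj : z j ≠ 0 := by simpa [htdef] using hjt
  have hzjpos : 0 < ‖z j‖ := norm_pos_iff.mpr hzj
  -- key identity
  have hsum : ∑ k, (∑ i, star (Φ i j) * Φ i k) * z k = 0 := by
    have h0 : ∑ i, star (Φ i j) * (Φ.mulVec z i) = 0 := by
      simp [hΦz]
    rw [← h0]
    simp only [Matrix.mulVec, dotProduct, Finset.mul_sum, Finset.sum_mul]
    rw [Finset.sum_comm]
    apply Finset.sum_congr rfl
    intro i _
    apply Finset.sum_congr rfl
    intro k _
    ring
  have hGj : (∑ i, star (Φ i j) * Φ i j) = 1 := by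
    have h1 : ∀ a : ℂ, star a * a = ((‖a‖ ^ 2 : ℝ) : ℂ) := fun a => by
      rw [Complex.star_def, Complex.conj_mul']
      push_cast
      ring
    calc ∑ i, star (Φ i j) * Φ i j = ∑ i, ((‖Φ i j‖ ^ 2 : ℝ) : ℂ) := by
          exact Finset.sum_congr rfl fun i _ => h1 _
      _ = (((∑ i, ‖Φ i j‖ ^ 2 : ℝ)) : ℂ) := by push_cast; ring
      _ = 1 := by rw [hcol j]; norm_num
  have hj_univ : j ∈ (Finset.univ : Finset (Fin N)) := Finset.mem_univ j
  have hsplit : z j = - ∑ k ∈ Finset.univ.erase j, (∑ i, star (Φ i j) * Φ i k) * z k := by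
    have := Finset.add_sum_erase Finset.univ
      (fun k => (∑ i, star (Φ i j) * Φ i k) * z k) hj_univ
    rw [hsum] at this
    have : (∑ i, star (Φ i j) * Φ i j) * z j
        = - ∑ k ∈ Finset.univ.erase j, (∑ i, star (Φ i j) * Φ i k) * z k :=
      by linear_combination this
    rw [hGj, one_mul] at this
    exact this
  have hbound : ‖z j‖ ≤ μ * ‖z j‖ * ((t.erase j).card : ℝ) := by
    calc ‖z j‖ = ‖∑ k ∈ Finset.univ.erase j, (∑ i, star (Φ i j) * Φ i k) * z k‖ := by
          rw [hsplit, norm_neg]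
      _ ≤ ∑ k ∈ Finset.univ.erase j, ‖(∑ i, star (Φ i j) * Φ i k) * z k‖ :=
          norm_sum_le _ _
      _ = ∑ k ∈ t.erase j, ‖(∑ i, star (Φ i j) * Φ i k) * z k‖ := by
          refine (Finset.sum_subset ?_ ?_).symm
          · intro k hk
            rw [Finset.mem_erase] at hk ⊢
            exact ⟨hk.1, Finset.mem_univ k⟩
          · intro k hk hk'
            have hzk : z k = 0 := by
              by_contra h
              exact hk' (Finset.mem_erase.mpr ⟨(Finset.mem_erase.mp hk).1,
                by simp [htdef, h]⟩)
            simp [hzk]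
      _ ≤ ∑ _k ∈ t.erase j, μ * ‖z j‖ := by
          refine Finset.sum_le_sum fun k hk => ?_
          rw [norm_mul]
          have hk' := Finset.mem_erase.mp hk
          have h1 : ‖∑ i, star (Φ i j) * Φ i k‖ ≤ μ := hcoh j k (fun h => hk'.1 h.symm)
          have h2 : ‖z k‖ ≤ ‖z j‖ := hjmax k hk'.2
          exact mul_le_mul h1 h2 (norm_nonneg _) (le_trans (norm_nonneg _) h1)
      _ = μ * ‖z j‖ * ((t.erase j).card : ℝ) := by
          rw [Finset.sum_const, nsmul_eq_mul]; ring
  have hcard : 1 / μ < (t.card : ℝ) := by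
    have h1 : 1 ≤ μ * ((t.erase j).card : ℝ) := by
      have := hbound
      rw [mul_comm μ ‖z j‖, mul_assoc] at this
      nlinarith [hzjpos]
    have h2 : ((t.erase j).card : ℝ) + 1 = t.card := by
      exact_mod_cast congrArg Nat.cast (Finset.card_erase_add_one hjt)
    have h3 : 1 / μ ≤ ((t.erase j).card : ℝ) := by
      rw [div_le_iff₀ hμ]
      nlinarith [h1]
    linarith
  have hsubset : Function.support z ⊆ Function.support x ∪ Function.support y := by
    intro k hk
    simp only [Function.mem_support, Set.mem_union] at hk ⊢
    by_contra h
    push_neg at h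
    exact hk (by simp [hzdef, h.1, h.2])
  have htcard : (t.card : ℝ) = (Function.support z).ncard := by
    have : Function.support z = ↑t := by
      ext k; simp [htdef, Function.mem_support]
    rw [this, Set.ncard_coe_finset]
  have hle : (Function.support z).ncard ≤
      (Function.support x).ncard + (Function.support y).ncard := by
    calc (Function.support z).ncard
        ≤ (Function.support x ∪ Function.support y).ncard :=
          Set.ncard_le_ncard hsubset (Set.toFinite _)
      _ ≤ (Function.support x).ncard + (Function.support y).ncard :=
          Set.ncard_union_le _ _
  calc 1 / μ < (t.card : ℝ) := hcard
    _ = (Function.support z).ncard := htcard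
    _ ≤ ((Function.support x).ncard : ℝ) + (Function.support y).ncard := by
        exact_mod_cast hle

end SparsityGap
end
end

section
/- Let Φ be an m×N complex matrix, and let S and T be sets of column indices, each indexing a linearly independent family of columns; set R = S ∪ T. Then the following are equivalent: (1) for every probability measure ν on ℂ^S that is absolutely continuous with respect to Lebesgue measure, ν{ x ∈ ℂ^S : Φ_S x ∈ range(Φ_T) } = 0; (2) |T| < rank(Φ_R). -/
noncomputable section

open Matrix MeasureTheory Finset

namespace SparsityGap

/-- Corollary 6.  Suppose `S` and `T` each index a linearly
independent family of columns and `R = S ∪ T`.  Then a generic signal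
`u = Φ_S x` almost surely has no representation over `T` if and only if
`|T| < rank(Φ_R)`. -/
theorem generic_signal_iff_rank {m N : ℕ} (Φ : Matrix (Fin m) (Fin N) ℂ)
    (S T : Finset (Fin N)) (hS : LinIndepOn Φ S) (hT : LinIndepOn Φ T) :
    (∀ ν : Measure ({j // j ∈ S} → ℂ), IsProbabilityMeasure ν → ν ≪ volume →
        ν {x | (sub Φ S).mulVec x ∈ colSpan Φ T} = 0) ↔
      T.card < (sub Φ (S ∪ T)).rank := by
  classical
  -- Basic facts about column spans
  have hcolspan : ∀ U : Finset (Fin N),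
      LinearMap.range (sub Φ U).mulVecLin = colSpan Φ U := by
    intro U
    rw [Matrix.range_mulVecLin]
    rfl
  have hrank : (sub Φ (S ∪ T)).rank = Module.finrank ℂ (colSpan Φ (S ∪ T)) := by
    rw [Matrix.rank, hcolspan]
  have hTcard : Module.finrank ℂ (colSpan Φ T) = T.card := by
    rw [colSpan, finrank_span_eq_card hT, Fintype.card_coe]
  have hTle : colSpan Φ T ≤ colSpan Φ (S ∪ T) := by
    rw [colSpan, Submodule.span_le]
    rintro _ ⟨j, rfl⟩
    exact Submodule.subset_span ⟨⟨(j : Fin N), mem_union_right _ j.2⟩, rfl⟩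
  have hSle : colSpan Φ S ≤ colSpan Φ (S ∪ T) := by
    rw [colSpan, Submodule.span_le]
    rintro _ ⟨j, rfl⟩
    exact Submodule.subset_span ⟨⟨(j : Fin N), mem_union_left _ j.2⟩, rfl⟩
  -- The bad set is a submodule
  set W : Submodule ℂ ({j // j ∈ S} → ℂ) :=
    (colSpan Φ T).comap (sub Φ S).mulVecLin with hW
  have hWset : {x | (sub Φ S).mulVec x ∈ colSpan Φ T} = (W : Set ({j // j ∈ S} → ℂ)) := rfl
  have hWtop : W = ⊤ ↔ colSpan Φ S ≤ colSpan Φ T := by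
    rw [← hcolspan S, hW]
    constructor
    · intro h
      rintro _ ⟨x, rfl⟩
      have : x ∈ (colSpan Φ T).comap (sub Φ S).mulVecLin := h ▸ Submodule.mem_top
      exact this
    · intro h
      rw [Submodule.eq_top_iff']
      intro x
      exact h ⟨x, rfl⟩
  -- an absolutely continuous probability measure
  have hball0 : (volume : Measure ({j // j ∈ S} → ℂ)) (Metric.ball 0 1) ≠ 0 :=
    (Metric.measure_ball_pos volume 0 one_pos).ne'
  have hballtop : (volume : Measure ({j // j ∈ S} → ℂ)) (Metric.ball 0 1) ≠ ⊤ :=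
    measure_ball_lt_top.ne
  set ν₀ : Measure ({j // j ∈ S} → ℂ) :=
    (volume (Metric.ball (0 : {j // j ∈ S} → ℂ) 1))⁻¹ •
      volume.restrict (Metric.ball 0 1) with hν₀
  have hν₀prob : IsProbabilityMeasure ν₀ := by
    constructor
    rw [hν₀, Measure.smul_apply, Measure.restrict_apply MeasurableSet.univ,
      Set.univ_inter, smul_eq_mul, ENNReal.inv_mul_cancel hball0 hballtop]
  have hν₀ac : ν₀ ≪ volume := by
    intro s hs
    rw [hν₀, Measure.smul_apply, Measure.restrict_apply' measurableSet_ball, smul_eq_mul]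
    rw [measure_mono_null Set.inter_subset_left hs, mul_zero]
  constructor
  · -- (1) → (2)
    intro h
    by_contra hc
    push_neg at hc
    have hle' : Module.finrank ℂ (colSpan Φ (S ∪ T)) ≤ Module.finrank ℂ (colSpan Φ T) := by
      rw [hTcard]; rw [hrank] at hc; exact hc
    have hTeq : colSpan Φ T = colSpan Φ (S ∪ T) :=
      Submodule.eq_of_le_of_finrank_le hTle hle'
    have hStop : W = ⊤ := hWtop.mpr (hTeq ▸ hSle)
    have := h ν₀ hν₀prob hν₀ac
    rw [hWset, hStop, Submodule.top_coe, measure_univ] at this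
    exact one_ne_zero this
  · -- (2) → (1)
    intro h ν hνprob hνac
    have hWne : W ≠ ⊤ := by
      intro htop
      have hSsub : colSpan Φ S ≤ colSpan Φ T := hWtop.mp htop
      have hRle : colSpan Φ (S ∪ T) ≤ colSpan Φ T := by
        rw [colSpan, Submodule.span_le]
        rintro _ ⟨j, rfl⟩
        rcases Finset.mem_union.mp j.2 with hj | hj
        · exact hSsub (Submodule.subset_span ⟨⟨(j : Fin N), hj⟩, rfl⟩)
        · exact Submodule.subset_span ⟨⟨(j : Fin N), hj⟩, rfl⟩
      have : Module.finrank ℂ (colSpan Φ (S ∪ T)) ≤ Module.finrank ℂ (colSpan Φ T) :=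
        Submodule.finrank_mono hRle
      rw [hTcard] at this
      rw [hrank] at h
      omega
    have hWR : (W.restrictScalars ℝ : Submodule ℝ ({j // j ∈ S} → ℂ)) ≠ ⊤ := by
      rw [Ne, Submodule.restrictScalars_eq_top_iff]
      exact hWne
    have hvol : (volume : Measure ({j // j ∈ S} → ℂ)) (W : Set _) = 0 := by
      have := MeasureTheory.Measure.addHaar_submodule
        (volume : Measure ({j // j ∈ S} → ℂ)) (W.restrictScalars ℝ) hWR
      simpa using this
    rw [hWset]
    exact hνac hvol

end SparsityGap
end
end

section
/- Let Φ be an m×N complex matrix. Let S index a linearly independent family of columns, and let T be any set of column indices. Assume |T| < rank(Φ_R) where R = S ∪ T. Then for every probability measure ν on ℂ^S absolutely continuous with respect to Lebesgue measure, ν{ x ∈ ℂ^S : Φ_S x ∈ range(Φ_T) } = 0; that is, a generic signal in range(Φ_S) almost surely has no representation using the columns in T. -/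
noncomputable section

open Matrix MeasureTheory Finset

namespace SparsityGap

/-- Corollary 7.  Suppose `S` indexes a linearly independent
family of columns, `T` is any set of column indices, and
`|T| < rank(Φ_R)` where `R = S ∪ T`.  Then a generic signal `u = Φ_S x`
almost surely has no representation over `T`. -/
theorem generic_signal_of_rank {m N : ℕ} (Φ : Matrix (Fin m) (Fin N) ℂ)
    (S T : Finset (Fin N)) (hS : LinIndepOn Φ S)
    (hrank : T.card < (sub Φ (S ∪ T)).rank)
    (ν : Measure ({j // j ∈ S} → ℂ)) (hν : IsProbabilityMeasure ν)
    (hac : ν ≪ volume) :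
    ν {x | (sub Φ S).mulVec x ∈ colSpan Φ T} = 0 := by
  classical
  -- the set in question is a submodule
  set p : Submodule ℂ ({j // j ∈ S} → ℂ) :=
    (colSpan Φ T).comap (sub Φ S).mulVecLin with hp
  have hset : {x | (sub Φ S).mulVec x ∈ colSpan Φ T} = (p : Set _) := rfl
  -- the column span of any finset has finrank ≤ card
  have hfinT : Module.finrank ℂ (colSpan Φ T) ≤ T.card := by
    have := finrank_span_le_card (R := ℂ)
      (Set.range fun j : {j // j ∈ T} => col Φ j)
    refine this.trans ?_
    calc (Set.range fun j : {j // j ∈ T} => col Φ j).toFinset.card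
        ≤ Fintype.card {j // j ∈ T} := by
          convert Fintype.card_range_le (fun j : {j // j ∈ T} => col Φ j)
          rw [Set.toFinset_card]
      _ = T.card := Fintype.card_coe T
  -- rank(Φ_R) equals finrank of colSpan (S ∪ T)
  have hcolT : ∀ (U : Finset (Fin N)),
      LinearMap.range (sub Φ U).mulVecLin = colSpan Φ U := by
    intro U
    rw [Matrix.range_mulVecLin]
    rfl
  have hrankR : (sub Φ (S ∪ T)).rank = Module.finrank ℂ (colSpan Φ (S ∪ T)) := by
    rw [Matrix.rank, hcolT]
  -- p is a proper submodule
  have hptop : p ≠ ⊤ := by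
    intro htop
    -- every column of Φ_S lies in colSpan Φ T
    have hmem : ∀ j : {j // j ∈ S}, col Φ (j : Fin N) ∈ colSpan Φ T := by
      intro j
      have hx : (Pi.single j 1 : {j // j ∈ S} → ℂ) ∈ p := htop ▸ Submodule.mem_top
      have : (sub Φ S).mulVec (Pi.single j 1) = col Φ (j : Fin N) := by
        funext i
        simp [Matrix.mulVec, dotProduct, sub, col, Pi.single_apply]
      rwa [Submodule.mem_comap, Matrix.mulVecLin_apply, this] at hx
    -- hence colSpan (S ∪ T) ≤ colSpan T
    have hle : colSpan Φ (S ∪ T) ≤ colSpan Φ T := by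
      refine Submodule.span_le.2 ?_
      rintro _ ⟨⟨j, hj⟩, rfl⟩
      rcases Finset.mem_union.1 hj with h | h
      · exact hmem ⟨j, h⟩
      · exact Submodule.subset_span ⟨⟨j, h⟩, rfl⟩
    have := (Submodule.finrank_mono hle).trans hfinT
    rw [hrankR] at hrank
    omega
  -- conclude via the Haar measure of a proper real submodule
  rw [hset]
  refine hac ?_
  have heq : (p : Set ({j // j ∈ S} → ℂ))
      = (Submodule.restrictScalars ℝ p : Set ({j // j ∈ S} → ℂ)) := rfl
  rw [heq]
  refine Measure.addHaar_submodule _ _ ?_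
  intro h
  apply hptop
  rw [Submodule.eq_top_iff']
  intro x
  have hx : x ∈ Submodule.restrictScalars ℝ p := h ▸ Submodule.mem_top
  exact hx

end SparsityGap
end
end

section
/- Let p and q be real numbers with 0 < p < q. Let A be a complex matrix with singular values σ_1 ≥ σ_2 ≥ … (the nonnegative square roots of the eigenvalues of AᴴA). Then rank(A) ≥ ( (Σ_i σ_i^p)^{1/p} / (Σ_i σ_i^q)^{1/q} )^{pq/(q−p)}, provided A ≠ 0. -/
noncomputable section

open Matrix MeasureTheory Finset

open scoped ComplexOrder
namespace SparsityGap

/-- The singular values of a matrix `A`: the nonnegative square roots of the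
eigenvalues of the Hermitian matrix `AᴴA`. -/
def singVal {m n : ℕ} (A : Matrix (Fin m) (Fin n) ℂ) (i : Fin n) : ℝ :=
  Real.sqrt ((Matrix.isHermitian_conjTranspose_mul_self A).eigenvalues i)

/-- Lemma 8, rank bounds via Schatten norm ratios.
For `0 < p < q` and a nonzero matrix `A`,
`rank(A) ≥ (‖A‖_{S_p} / ‖A‖_{S_q}) ^ (pq/(q-p))`. -/
theorem schatten_ratio_le_rank {m n : ℕ} (p q : ℝ) (hp : 0 < p) (hpq : p < q)
    (A : Matrix (Fin m) (Fin n) ℂ) (hA : A ≠ 0) :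
    ((∑ i, singVal A i ^ p) ^ (1 / p) / (∑ i, singVal A i ^ q) ^ (1 / q)) ^
        (p * q / (q - p)) ≤ (A.rank : ℝ) := by
  classical
  have hq : 0 < q := hp.trans hpq
  have hH := Matrix.isHermitian_conjTranspose_mul_self A
  set μ := hH.eigenvalues with hμ
  have hμ0 : ∀ i, 0 ≤ μ i := fun i => Matrix.eigenvalues_conjTranspose_mul_self_nonneg A i
  have hσ0 : ∀ i, 0 ≤ singVal A i := fun i => Real.sqrt_nonneg _
  have hσμ : ∀ i, singVal A i = 0 ↔ μ i = 0 := by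
    intro i
    rw [singVal, Real.sqrt_eq_zero (hμ0 i)]
  have hrank : (A.rank : ℝ) = ∑ i, (if singVal A i = 0 then (0:ℝ) else 1) := by
    have h1 : A.rank = Fintype.card {i // μ i ≠ 0} := by
      rw [← Matrix.rank_conjTranspose_mul_self A]
      exact hH.rank_eq_card_non_zero_eigs
    have h2 : Fintype.card {i // μ i ≠ 0} = ∑ i : Fin n, if μ i = 0 then 0 else 1 := by
      rw [Fintype.card_subtype, Finset.card_eq_sum_ones, Finset.sum_filter]
      apply Finset.sum_congr rfl
      intro i _
      by_cases h : μ i = 0 <;> simp [h]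
    rw [h1, h2]
    push_cast
    congr 1; ext i
    by_cases h : μ i = 0 <;> simp [h, hσμ i]
  have hex : ∃ i, singVal A i ≠ 0 := by
    by_contra h
    push_neg at h
    apply hA
    rw [← Matrix.conjTranspose_mul_self_eq_zero (A := A)]
    have hd : Matrix.diagonal (RCLike.ofReal ∘ μ) = (0 : Matrix (Fin n) (Fin n) ℂ) := by
      have hz : ∀ i, μ i = 0 := fun i => (hσμ i).mp (h i)
      ext i j
      by_cases hij : i = j <;> simp [Matrix.diagonal, hij, hz]
    calc Aᴴ * A = _ := hH.spectral_theorem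
      _ = 0 := by rw [hd]; simp
  have hsum_pos : ∀ r : ℝ, 0 < r → 0 < ∑ i, singVal A i ^ r := by
    intro r hr
    obtain ⟨i, hi⟩ := hex
    apply Finset.sum_pos' (fun j _ => Real.rpow_nonneg (hσ0 j) r)
    exact ⟨i, Finset.mem_univ i, Real.rpow_pos_of_pos (lt_of_le_of_ne (hσ0 i) (Ne.symm hi)) r⟩
  have hs := hsum_pos p hp
  have ht := hsum_pos q hq
  set s := ∑ i, singVal A i ^ p with hsdef
  set t := ∑ i, singVal A i ^ q with htdef
  have hqp : 0 < q - p := sub_pos.mpr hpq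
  have hconj : Real.HolderConjugate (q / p) (q / (q - p)) := by
    rw [Real.holderConjugate_iff]; constructor
    · rw [lt_div_iff₀ hp]; linarith
    · rw [inv_div, inv_div, ← add_div, add_sub_cancel, div_self hq.ne']
  have hrank_nonneg : (0:ℝ) ≤ (A.rank : ℝ) := Nat.cast_nonneg _
  have key : s ≤ t ^ (p / q) * (A.rank : ℝ) ^ ((q - p) / q) := by
    have H := Real.inner_le_Lp_mul_Lq_of_nonneg (s := Finset.univ)
      (f := fun i => singVal A i ^ p)
      (g := fun i => if singVal A i = 0 then (0:ℝ) else 1) hconj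
      (fun i _ => Real.rpow_nonneg (hσ0 i) p)
      (fun i _ => by positivity)
    have e1 : ∑ i, (singVal A i ^ p) * (if singVal A i = 0 then (0:ℝ) else 1) = s := by
      rw [hsdef]
      apply Finset.sum_congr rfl
      intro i _
      by_cases h : singVal A i = 0 <;> simp [h, Real.zero_rpow (ne_of_gt hp)]
    have e2 : ∑ i, (singVal A i ^ p) ^ (q / p) = t := by
      rw [htdef]
      apply Finset.sum_congr rfl
      intro i _
      rw [← Real.rpow_mul (hσ0 i)]
      congr 1
      field_simp
    have e3 : ∑ i, (if singVal A i = 0 then (0:ℝ) else 1) ^ (q / (q - p)) = (A.rank : ℝ) := by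
      rw [hrank]
      apply Finset.sum_congr rfl
      intro i _
      by_cases h : singVal A i = 0 <;>
        simp [h, Real.zero_rpow (by positivity : q / (q - p) ≠ 0)]
    rw [e1, e2, e3] at H
    convert H using 3
    · rw [one_div_div]
    · rw [one_div_div]
  -- final arithmetic
  have step : s / t ^ (p / q) ≤ (A.rank : ℝ) ^ ((q - p) / q) := by
    rw [div_le_iff₀ (Real.rpow_pos_of_pos ht _), mul_comm]
    exact key
  have main : (s / t ^ (p / q)) ^ (q / (q - p)) ≤ (A.rank : ℝ) := by
    have := Real.rpow_le_rpow (by positivity) step (by positivity : (0:ℝ) ≤ q / (q - p))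
    rwa [← Real.rpow_mul hrank_nonneg, div_mul_div_comm, mul_comm (q - p) q,
      div_self (by positivity), Real.rpow_one] at this
  calc (s ^ (1/p) / t ^ (1/q)) ^ (p * q / (q - p))
      = (s / t ^ (p/q)) ^ (q / (q - p)) := by
        rw [Real.div_rpow (by positivity) (by positivity),
            Real.div_rpow (by positivity) (by positivity),
            ← Real.rpow_mul hs.le, ← Real.rpow_mul ht.le, ← Real.rpow_mul ht.le]
        rw [show 1 / p * (p * q / (q - p)) = q / (q - p) by field_simp,
            show 1 / q * (p * q / (q - p)) = p / q * (q / (q - p)) by field_simp]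
    _ ≤ (A.rank : ℝ) := main


end SparsityGap
end
end

section
/- Let Φ be an m×N complex matrix with unit-norm columns and coherence μ. Let R be a set of r column indices. Then rank(Φ_R) · (1 + (r − 1)μ²) ≥ r; equivalently, rank(Φ_R) ≥ r / (1 + (r − 1)μ²). -/
noncomputable section

open Matrix MeasureTheory Finset

namespace SparsityGap

private lemma trace_eq_sum_eigs {n : Type*} [Fintype n] [DecidableEq n] {A : Matrix n n ℂ}
    (hA : A.IsHermitian) : A.trace = ∑ i, (hA.eigenvalues i : ℂ) := by
  set U : Matrix n n ℂ := (hA.eigenvectorUnitary : Matrix n n ℂ) with hU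
  have h1 : star U * U = 1 := (Unitary.mem_iff.mp hA.eigenvectorUnitary.2).1
  have h2 : ∀ X : Matrix n n ℂ, star U * (U * X) = X := fun X => by
    rw [← Matrix.mul_assoc, h1, Matrix.one_mul]
  conv_lhs => rw [hA.spectral_theorem, Unitary.conjStarAlgAut_apply, ← hU]
  rw [Matrix.trace_mul_comm, h2]
  simp [Matrix.trace_diagonal]

private lemma trace_sq_eq_sum_eigs_sq {n : Type*} [Fintype n] [DecidableEq n] {A : Matrix n n ℂ}
    (hA : A.IsHermitian) : (A * A).trace = ∑ i, (hA.eigenvalues i : ℂ) ^ 2 := by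
  set U : Matrix n n ℂ := (hA.eigenvectorUnitary : Matrix n n ℂ) with hU
  set D : Matrix n n ℂ := diagonal (RCLike.ofReal ∘ hA.eigenvalues) with hD
  have h1 : star U * U = 1 := (Unitary.mem_iff.mp hA.eigenvectorUnitary.2).1
  have h2 : ∀ X : Matrix n n ℂ, star U * (U * X) = X := fun X => by
    rw [← Matrix.mul_assoc, h1, Matrix.one_mul]
  have e : (U * D * star U) * (U * D * star U) = U * (D * D) * star U := by
    simp only [Matrix.mul_assoc, h2]
  conv_lhs => rw [hA.spectral_theorem, Unitary.conjStarAlgAut_apply, ← hU, ← hD, e]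
  rw [Matrix.trace_mul_comm, h2, hD, Matrix.diagonal_mul_diagonal]
  simp [Matrix.trace_diagonal, sq]

private lemma key_ineq {n : Type*} [Fintype n] [DecidableEq n] {A : Matrix n n ℂ}
    (hA : A.IsHermitian) :
    (∑ i, hA.eigenvalues i) ^ 2 ≤ (A.rank : ℝ) * ∑ i, hA.eigenvalues i ^ 2 := by
  classical
  set f := hA.eigenvalues
  have h1 : ∑ i, f i = ∑ i ∈ univ.filter (fun i => f i ≠ 0), f i := by
    rw [sum_filter_ne_zero]
  have h3 : ∑ i ∈ univ.filter (fun i => f i ≠ 0), f i ^ 2 ≤ ∑ i, f i ^ 2 :=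
    sum_le_sum_of_subset_of_nonneg (filter_subset _ _) (fun i _ _ => sq_nonneg _)
  have h4 : (univ.filter (fun i => f i ≠ 0)).card = A.rank := by
    rw [hA.rank_eq_card_non_zero_eigs, Fintype.card_subtype]
  calc (∑ i, f i) ^ 2 = (∑ i ∈ univ.filter (fun i => f i ≠ 0), f i) ^ 2 := by rw [h1]
    _ ≤ ((univ.filter (fun i => f i ≠ 0)).card : ℝ) * ∑ i ∈ univ.filter (fun i => f i ≠ 0), f i ^ 2 :=
        sq_sum_le_card_mul_sum_sq
    _ ≤ (A.rank : ℝ) * ∑ i, f i ^ 2 := by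
        rw [h4]
        exact mul_le_mul_of_nonneg_left h3 (by positivity)

/-- Lemma 10.  If `Φ` has unit-norm columns and coherence at
most `μ`, then for any set `R` of `r` columns,
`rank(Φ_R) · (1 + (r − 1)μ²) ≥ r`, i.e. `rank(Φ_R) ≥ r / (1 + (r − 1)μ²)`. -/
theorem rank_submatrix_ge_of_coherence {m N : ℕ} (Φ : Matrix (Fin m) (Fin N) ℂ)
    (μ : ℝ) (hμ : 0 ≤ μ) (hcol : UnitColumns Φ) (hcoh : CoherenceLE Φ μ)
    (R : Finset (Fin N)) :
    (R.card : ℝ) ≤ ((sub Φ R).rank : ℝ) * (1 + ((R.card : ℝ) - 1) * μ ^ 2) := by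
  classical
  rcases Nat.eq_zero_or_pos R.card with h0 | hpos
  · -- empty case: rank is 0 too? no: goal 0 ≤ rank * (1 - μ²). rank = 0.
    have : (sub Φ R).rank = 0 := by
      have h := (sub Φ R).rank_le_card_width
      simp only [Fintype.card_coe, h0] at h
      omega
    simp [h0, this]
  set A := sub Φ R with hAdef
  set G := Aᴴ * A with hGdef
  have hG : G.IsHermitian := isHermitian_conjTranspose_mul_self A
  have hcard : Fintype.card {j // j ∈ R} = R.card := Fintype.card_coe R
  have hentry : ∀ j k : {j // j ∈ R}, G j k = ∑ i, star (Φ i (j : Fin N)) * Φ i (k : Fin N) := by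
    intro j k
    simp [hGdef, hAdef, Matrix.mul_apply, Matrix.conjTranspose_apply, sub, Matrix.submatrix]
  have hdiag : ∀ j : {j // j ∈ R}, G j j = 1 := by
    intro j
    rw [hentry]
    have : ∀ i, star (Φ i (j : Fin N)) * Φ i (j : Fin N) = ((‖Φ i (j : Fin N)‖ ^ 2 : ℝ) : ℂ) := by
      intro i
      rw [RCLike.star_def, RCLike.conj_mul]
      norm_cast
    rw [Finset.sum_congr rfl fun i _ => this i, ← Complex.ofReal_sum, hcol (j : Fin N)]
    norm_num
  have hoff : ∀ j k : {j // j ∈ R}, j ≠ k → ‖G j k‖ ≤ μ := by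
    intro j k hjk
    rw [hentry]
    exact hcoh _ _ (fun h => hjk (Subtype.ext h))
  -- trace of G
  have htr : ∑ i, hG.eigenvalues i = (R.card : ℝ) := by
    have h1 : G.trace = (R.card : ℂ) := by
      rw [Matrix.trace]
      simp only [Matrix.diag]
      rw [Finset.sum_congr rfl fun j _ => hdiag j]
      simp [hcard]
    have h2 := trace_eq_sum_eigs hG
    rw [h1] at h2
    exact_mod_cast h2.symm
  -- trace of G²
  have htr2 : ∑ i, hG.eigenvalues i ^ 2 = ∑ j, ∑ k, ‖G j k‖ ^ 2 := by
    have h1 : (G * G).trace = ((∑ j, ∑ k, ‖G j k‖ ^ 2 : ℝ) : ℂ) := by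
      rw [Matrix.trace]
      simp only [Matrix.diag, Matrix.mul_apply]
      push_cast
      refine Finset.sum_congr rfl fun j _ => Finset.sum_congr rfl fun k _ => ?_
      rw [show G k j = star (G j k) from (hG.apply k j).symm, RCLike.star_def, RCLike.mul_conj]
      norm_cast
    have h2 := trace_sq_eq_sum_eigs_sq hG
    rw [h1] at h2
    exact_mod_cast h2.symm
  -- bound the Frobenius norm
  have hfro : ∑ j, ∑ k, ‖G j k‖ ^ 2 ≤
      (R.card : ℝ) * (1 + ((R.card : ℝ) - 1) * μ ^ 2) := by
    have hrow : ∀ j : {j // j ∈ R}, ∑ k, ‖G j k‖ ^ 2 ≤ 1 + ((R.card : ℝ) - 1) * μ ^ 2 := by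
      intro j
      rw [← Finset.add_sum_erase _ _ (mem_univ j)]
      have h1 : ‖G j j‖ ^ 2 = 1 := by rw [hdiag]; simp
      have h2 : ∑ k ∈ univ.erase j, ‖G j k‖ ^ 2 ≤ ((univ.erase j).card : ℝ) * μ ^ 2 := by
        rw [← nsmul_eq_mul]
        refine Finset.sum_le_card_nsmul _ _ _ fun k hk => ?_
        have hkj : j ≠ k := (Finset.ne_of_mem_erase hk).symm
        exact pow_le_pow_left₀ (norm_nonneg _) (hoff j k hkj) 2
      have h3 : ((univ.erase j).card : ℝ) = (R.card : ℝ) - 1 := by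
        rw [Finset.card_erase_of_mem (mem_univ j), Finset.card_univ, hcard]
        rw [Nat.cast_sub hpos]
        norm_num
      rw [h1]
      rw [h3] at h2
      linarith
    calc ∑ j, ∑ k, ‖G j k‖ ^ 2 ≤ ∑ _j : {j // j ∈ R}, (1 + ((R.card : ℝ) - 1) * μ ^ 2) :=
          Finset.sum_le_sum fun j _ => hrow j
      _ = (R.card : ℝ) * (1 + ((R.card : ℝ) - 1) * μ ^ 2) := by
          rw [Finset.sum_const, Finset.card_univ, hcard, nsmul_eq_mul]
  have hrank : G.rank = A.rank := open ComplexOrder in Matrix.rank_conjTranspose_mul_self A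
  have key := key_ineq hG
  rw [htr, htr2, hrank] at key
  have step : (A.rank : ℝ) * (∑ j, ∑ k, ‖G j k‖ ^ 2) ≤
      (A.rank : ℝ) * ((R.card : ℝ) * (1 + ((R.card : ℝ) - 1) * μ ^ 2)) :=
    mul_le_mul_of_nonneg_left hfro (Nat.cast_nonneg _)
  have hr0 : (0 : ℝ) < R.card := by exact_mod_cast hpos
  nlinarith [key, step, hr0]

end SparsityGap
end
end

section
/- Let Φ be an m×N complex matrix with unit-norm columns and coherence μ. Let S index a linearly independent family of s columns, let T be a set of t column indices with tμ² < 1, and let δ = |S ∩ T|. Assume δ < s·(1 − ((t−1)/s)·(tμ²/(1 − tμ²))). Then for every probability measure ν on ℂ^S absolutely continuous with respect to Lebesgue measure, ν{ x ∈ ℂ^S : Φ_S x ∈ range(Φ_T) } = 0; that is, a generic signal in range(Φ_S) almost surely cannot be represented using the columns in T. -/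
noncomputable section

open Matrix MeasureTheory Finset

namespace SparsityGap

open scoped InnerProductSpace

lemma mul_star_eq (z : ℂ) : z * star z = ((‖z‖ ^ 2 : ℝ) : ℂ) := by
  rw [show star z = (starRingEnd ℂ) z from rfl, RCLike.mul_conj]
  norm_cast

lemma conj_mul_eq (z : ℂ) : (starRingEnd ℂ) z * z = ((‖z‖ ^ 2 : ℝ) : ℂ) := by
  rw [RCLike.conj_mul]; norm_cast

lemma star_mul_eq (z : ℂ) : star z * z = ((‖z‖ ^ 2 : ℝ) : ℂ) := by
  rw [mul_comm]; exact mul_star_eq z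

set_option maxHeartbeats 1000000 in
lemma core {m N : ℕ} (Φ : Matrix (Fin m) (Fin N) ℂ) (μ : ℝ) (hμ : 0 ≤ μ)
    (hcol : UnitColumns Φ) (hcoh : CoherenceLE Φ μ)
    (S T : Finset (Fin N))
    (htμ : (T.card : ℝ) * μ ^ 2 < 1)
    (hδ : ((S ∩ T).card : ℝ) <
      (S.card : ℝ) * (1 - (((T.card : ℝ) - 1) / (S.card : ℝ)) *
        ((T.card : ℝ) * μ ^ 2 / (1 - (T.card : ℝ) * μ ^ 2))))
    (hall : ∀ j ∈ S, col Φ j ∈ colSpan Φ T) : False := by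
  classical
  set s : ℝ := (S.card : ℝ) with hs
  set t : ℝ := (T.card : ℝ) with ht
  set δ : ℝ := ((S ∩ T).card : ℝ) with hδdef
  have h1 : (0:ℝ) < 1 - t * μ ^ 2 := by linarith
  have hδ0 : (0:ℝ) ≤ δ := Nat.cast_nonneg _
  have ht0 : (0:ℝ) ≤ t := Nat.cast_nonneg _
  have hs0 : (0:ℝ) < s := by
    rcases lt_or_ge 0 s with h | h
    · exact h
    · have hs0' : s = 0 := le_antisymm h (Nat.cast_nonneg _)
      rw [hs0'] at hδ; simp at hδ; linarith
  have hScard : 0 < S.card := by rw [hs] at hs0; exact_mod_cast hs0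
  -- key numeric consequence of hδ
  have hkey : t * (t - 1) * μ ^ 2 < (s - δ) * (1 - t * μ ^ 2) := by
    have hexp : s * (1 - ((t - 1) / s) * (t * μ ^ 2 / (1 - t * μ ^ 2)))
        = s - (t - 1) * (t * μ ^ 2) / (1 - t * μ ^ 2) := by
      field_simp
    rw [hexp] at hδ
    have h2 : (t - 1) * (t * μ ^ 2) / (1 - t * μ ^ 2) < s - δ := by linarith
    have := (div_lt_iff₀ h1).mp h2
    nlinarith
  -- Euclidean setting
  set E := EuclideanSpace ℂ (Fin m) with hE
  let e : (Fin m → ℂ) ≃ₗ[ℂ] E := (WithLp.linearEquiv 2 ℂ (Fin m → ℂ)).symm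
  set V : Submodule ℂ E := (colSpan Φ T).map (e : (Fin m → ℂ) →ₗ[ℂ] E) with hV
  set r : ℕ := Module.finrank ℂ V with hr
  have hrt : (r : ℝ) ≤ t := by
    have hVeq : Module.finrank ℂ V = Module.finrank ℂ (colSpan Φ T) :=
      LinearEquiv.finrank_map_eq e (colSpan Φ T)
    have h3 : Module.finrank ℂ (colSpan Φ T) ≤ Fintype.card {j // j ∈ T} :=
      finrank_range_le_card (R := ℂ) (fun j : {j // j ∈ T} => col Φ j)
    rw [Fintype.card_coe] at h3
    rw [ht, hr, hVeq]
    exact_mod_cast h3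
  set U : Finset (Fin N) := S ∪ T with hU
  set n : ℕ := U.card with hn
  have hnst : (n : ℝ) + δ = s + t := by
    rw [hn, hs, ht, hδdef, hU]
    exact_mod_cast congrArg (Nat.cast : ℕ → ℝ) (Finset.card_union_add_card_inter S T)
  have hn1 : 1 ≤ (n : ℝ) := by
    obtain ⟨a, ha⟩ := Finset.card_pos.mp hScard
    have : 0 < U.card := Finset.card_pos.mpr ⟨a, Finset.mem_union_left T ha⟩
    exact_mod_cast this
  let ψ : {j // j ∈ U} → E := fun j => e (col Φ j)
  have hmemV : ∀ j : {j // j ∈ U}, ψ j ∈ V := by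
    rintro ⟨j, hj⟩
    rcases Finset.mem_union.mp hj with hjS | hjT
    · exact Submodule.mem_map_of_mem (hall j hjS)
    · exact Submodule.mem_map_of_mem (Submodule.subset_span ⟨⟨j, hjT⟩, rfl⟩)
  -- inner products of columns
  have hinner : ∀ j k : {j // j ∈ U}, ⟪ψ j, ψ k⟫_ℂ = ∑ i, star (Φ i j.1) * Φ i k.1 := by
    intro j k
    simp [ψ, PiLp.inner_apply, RCLike.inner_apply, col]
    rw [PiLp.inner_apply]
    exact Finset.sum_congr rfl fun i _ => by simp [e, col, mul_comm]; rfl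
  have hdiag : ∀ j : {j // j ∈ U}, ⟪ψ j, ψ j⟫_ℂ = 1 := by
    intro j
    rw [hinner]
    have : ∀ i, star (Φ i j.1) * Φ i j.1 = ((‖Φ i j.1‖ ^ 2 : ℝ) : ℂ) := by
      intro i
      exact star_mul_eq _
    rw [Finset.sum_congr rfl (fun i _ => this i), ← Complex.ofReal_sum, hcol j.1]
    norm_num
  have hoff : ∀ j k : {j // j ∈ U}, j ≠ k → ‖⟪ψ j, ψ k⟫_ℂ‖ ≤ μ := by
    intro j k hjk
    rw [hinner]
    exact hcoh j.1 k.1 (fun h => hjk (Subtype.ext h))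
  -- orthonormal basis of V
  haveI : FiniteDimensional ℂ V := inferInstance
  let b : OrthonormalBasis (Fin r) ℂ V := stdOrthonormalBasis ℂ V
  let B : Fin r → {j // j ∈ U} → ℂ := fun l j => ⟪((b l : V) : E), ψ j⟫_ℂ
  have hexpand : ∀ (x : E), x ∈ V → x = ∑ l, ⟪((b l : V) : E), x⟫_ℂ • ((b l : V) : E) := by
    intro x hx
    have h4 := b.sum_repr' (⟨x, hx⟩ : V)
    have h5 := congrArg (Subtype.val : V → E) h4
    simp only [AddSubmonoidClass.coe_finset_sum, SetLike.val_smul, Submodule.coe_inner] at h5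
    exact h5.symm
  have hgram : ∀ j k : {j // j ∈ U},
      ⟪ψ j, ψ k⟫_ℂ = ∑ l, starRingEnd ℂ (B l j) * B l k := by
    intro j k
    calc ⟪ψ j, ψ k⟫_ℂ = ⟪∑ l, B l j • ((b l : V) : E), ψ k⟫_ℂ := by
          rw [← hexpand (ψ j) (hmemV j)]
      _ = ∑ l, starRingEnd ℂ (B l j) * ⟪((b l : V) : E), ψ k⟫_ℂ := by
          rw [sum_inner]; simp [inner_smul_left]
      _ = ∑ l, starRingEnd ℂ (B l j) * B l k := rfl
  -- column norms of B
  have hcolB : ∀ j : {j // j ∈ U}, ∑ l, ‖B l j‖ ^ 2 = 1 := by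
    intro j
    have h6 : (∑ l, ((‖B l j‖ ^ 2 : ℝ) : ℂ)) = 1 := by
      rw [← hdiag j, hgram j j]
      refine Finset.sum_congr rfl fun l _ => ?_
      exact (conj_mul_eq _).symm
    exact_mod_cast h6
  let d : Fin r → ℝ := fun l => ∑ j, ‖B l j‖ ^ 2
  have hd0 : ∀ l, 0 ≤ d l := fun l => Finset.sum_nonneg fun j _ => sq_nonneg _
  have hsumd : ∑ l, d l = (n : ℝ) := by
    rw [show (∑ l, d l) = ∑ j : {j // j ∈ U}, ∑ l, ‖B l j‖ ^ 2 from Finset.sum_comm]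
    rw [Finset.sum_congr rfl fun j _ => hcolB j]
    simp [hn]
  -- Cauchy–Schwarz
  have hCS : (n : ℝ) ^ 2 ≤ (r : ℝ) * ∑ l, (d l) ^ 2 := by
    have := sq_sum_le_card_mul_sum_sq (s := (Finset.univ : Finset (Fin r))) (f := d)
    rw [hsumd] at this
    simpa using this
  -- trace identity
  let Bm : Matrix (Fin r) {j // j ∈ U} ℂ := fun l j => B l j
  have hfro : ∀ {α β : Type} [Fintype α] [Fintype β] (A : Matrix α β ℂ),
      (A * Aᴴ).trace = ((∑ i, ∑ k, ‖A i k‖ ^ 2 : ℝ) : ℂ) := by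
    intro α β _ _ A
    rw [Matrix.trace]
    push_cast
    refine Finset.sum_congr rfl fun i _ => ?_
    rw [Matrix.diag, Matrix.mul_apply]
    refine Finset.sum_congr rfl fun k _ => ?_
    rw [Matrix.conjTranspose_apply, mul_star_eq]
    norm_cast
  have htr : (∑ l, ∑ l', ‖(Bm * Bmᴴ) l l'‖ ^ 2 : ℝ)
      = (∑ j, ∑ j', ‖(Bmᴴ * Bm) j j'‖ ^ 2 : ℝ) := by
    have h7a : (Bm * Bmᴴ) * (Bm * Bmᴴ)ᴴ = Bm * (Bmᴴ * Bm * Bmᴴ) := by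
      rw [Matrix.conjTranspose_mul, Matrix.conjTranspose_conjTranspose]
      simp only [Matrix.mul_assoc]
    have h7b : (Bmᴴ * Bm) * (Bmᴴ * Bm)ᴴ = (Bmᴴ * Bm * Bmᴴ) * Bm := by
      rw [Matrix.conjTranspose_mul, Matrix.conjTranspose_conjTranspose]
      simp only [Matrix.mul_assoc]
    have h7 : ((Bm * Bmᴴ) * (Bm * Bmᴴ)ᴴ).trace = ((Bmᴴ * Bm) * (Bmᴴ * Bm)ᴴ).trace := by
      rw [h7a, h7b, Matrix.trace_mul_comm]
    rw [hfro, hfro] at h7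
    exact_mod_cast h7
  -- diagonal of Bm * Bmᴴ is d
  have hCdiag : ∀ l, (Bm * Bmᴴ) l l = ((d l : ℝ) : ℂ) := by
    intro l
    rw [Matrix.mul_apply]
    have hz : ∀ j : {j // j ∈ U}, Bm l j * Bmᴴ j l = ((‖B l j‖ ^ 2 : ℝ) : ℂ) := by
      intro j
      rw [Matrix.conjTranspose_apply]
      exact mul_star_eq _
    exact (Finset.sum_congr rfl fun j _ => hz j).trans (by rw [← Complex.ofReal_sum])
  have hsum_d_sq : ∑ l, (d l) ^ 2 ≤ ∑ j, ∑ j', ‖(Bmᴴ * Bm) j j'‖ ^ 2 := by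
    rw [← htr]
    refine Finset.sum_le_sum fun l _ => ?_
    have h8 : (d l) ^ 2 = ‖(Bm * Bmᴴ) l l‖ ^ 2 := by
      rw [hCdiag l, Complex.norm_real, Real.norm_eq_abs, sq_abs]
    rw [h8]
    exact Finset.single_le_sum (f := fun l' => ‖(Bm * Bmᴴ) l l'‖ ^ 2)
      (fun l' _ => sq_nonneg _) (Finset.mem_univ l)
  -- Gram bound
  have hD : ∀ j j' : {j // j ∈ U}, (Bmᴴ * Bm) j j' = ⟪ψ j, ψ j'⟫_ℂ := by
    intro j j'
    rw [Matrix.mul_apply, hgram j j']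
    refine Finset.sum_congr rfl fun l _ => ?_
    rw [Matrix.conjTranspose_apply]
    rfl
  have hgrambound : (∑ j, ∑ j', ‖(Bmᴴ * Bm) j j'‖ ^ 2 : ℝ)
      ≤ (n : ℝ) * (1 + ((n : ℝ) - 1) * μ ^ 2) := by
    have h9 : ∀ j : {j // j ∈ U}, (∑ j', ‖(Bmᴴ * Bm) j j'‖ ^ 2 : ℝ)
        ≤ 1 + ((n : ℝ) - 1) * μ ^ 2 := by
      intro j
      rw [← Finset.add_sum_erase _ _ (Finset.mem_univ j)]
      have h10 : ‖(Bmᴴ * Bm) j j‖ ^ 2 = 1 := by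
        rw [hD, hdiag]; norm_num
      have h11 : (∑ j' ∈ Finset.univ.erase j, ‖(Bmᴴ * Bm) j j'‖ ^ 2 : ℝ)
          ≤ ((n : ℝ) - 1) * μ ^ 2 := by
        have h12 : ∀ j' ∈ Finset.univ.erase j, ‖(Bmᴴ * Bm) j j'‖ ^ 2 ≤ μ ^ 2 := by
          intro j' hj'
          have hne : j ≠ j' := (Finset.ne_of_mem_erase hj').symm
          have := hoff j j' hne
          rw [hD]
          exact pow_le_pow_left₀ (norm_nonneg _) this 2
        have h13 := Finset.sum_le_card_nsmul _ _ _ h12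
        rw [Finset.card_erase_of_mem (Finset.mem_univ j)] at h13
        have hcard : (Fintype.card {j // j ∈ U} : ℝ) = (n : ℝ) := by
          rw [Fintype.card_coe]
        have h14 : ((Fintype.card {j // j ∈ U} - 1 : ℕ) : ℝ) = (n : ℝ) - 1 := by
          have : 1 ≤ Fintype.card {j // j ∈ U} := by
            rw [Fintype.card_coe]; exact_mod_cast hn1
          push_cast [Nat.cast_sub this]
          rw [Fintype.card_coe]
        calc (∑ j' ∈ Finset.univ.erase j, ‖(Bmᴴ * Bm) j j'‖ ^ 2 : ℝ)
            ≤ (Fintype.card {j // j ∈ U} - 1 : ℕ) • (μ ^ 2) := by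
              simpa [Finset.card_univ] using h13
          _ = ((n : ℝ) - 1) * μ ^ 2 := by
              rw [nsmul_eq_mul, h14]
      rw [h10]
      linarith
    calc (∑ j, ∑ j', ‖(Bmᴴ * Bm) j j'‖ ^ 2 : ℝ)
        ≤ ∑ _j : {j // j ∈ U}, (1 + ((n : ℝ) - 1) * μ ^ 2) :=
          Finset.sum_le_sum fun j _ => h9 j
      _ = (n : ℝ) * (1 + ((n : ℝ) - 1) * μ ^ 2) := by
          rw [Finset.sum_const, Finset.card_univ, Fintype.card_coe, nsmul_eq_mul]
  -- combine
  have hfinal : (n : ℝ) ^ 2 ≤ t * ((n : ℝ) * (1 + ((n : ℝ) - 1) * μ ^ 2)) := by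
    have h15 : (0 : ℝ) ≤ ∑ l, (d l) ^ 2 := Finset.sum_nonneg fun l _ => sq_nonneg _
    have h16 : (∑ l, (d l) ^ 2 : ℝ) ≤ (n : ℝ) * (1 + ((n : ℝ) - 1) * μ ^ 2) :=
      hsum_d_sq.trans hgrambound
    calc (n : ℝ) ^ 2 ≤ (r : ℝ) * ∑ l, (d l) ^ 2 := hCS
      _ ≤ t * ((n : ℝ) * (1 + ((n : ℝ) - 1) * μ ^ 2)) := by
          apply mul_le_mul hrt h16 h15 ht0
  have hnle : (n : ℝ) ≤ t * (1 + ((n : ℝ) - 1) * μ ^ 2) := by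
    have hnpos : (0 : ℝ) < (n : ℝ) := by linarith
    nlinarith
  nlinarith [sq_nonneg μ]

/-- Theorem 11.  Let `Φ` have unit-norm columns and
coherence at most `μ`.  Let `S` index a linearly independent family of `s`
columns, let `T` be a set of `t` columns with `tμ² < 1`, and let
`δ = |S ∩ T|`.  If `δ < s(1 − ((t−1)/s)·(tμ²/(1 − tμ²)))`, then a generic
signal in `range(Φ_S)` almost surely cannot be represented using the columns
in `T`. -/
theorem sparsity_gap_strong_incoherence {m N : ℕ}
    (Φ : Matrix (Fin m) (Fin N) ℂ) (μ : ℝ) (hμ : 0 ≤ μ)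
    (hcol : UnitColumns Φ) (hcoh : CoherenceLE Φ μ)
    (S T : Finset (Fin N)) (hS : LinIndepOn Φ S)
    (htμ : (T.card : ℝ) * μ ^ 2 < 1)
    (hδ : ((S ∩ T).card : ℝ) <
      (S.card : ℝ) * (1 - (((T.card : ℝ) - 1) / (S.card : ℝ)) *
        ((T.card : ℝ) * μ ^ 2 / (1 - (T.card : ℝ) * μ ^ 2))))
    (ν : Measure ({j // j ∈ S} → ℂ)) (hν : IsProbabilityMeasure ν)
    (hac : ν ≪ volume) :
    ν {x | (sub Φ S).mulVec x ∈ colSpan Φ T} = 0 := by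
  classical
  set W : Submodule ℂ ({j // j ∈ S} → ℂ) :=
    (colSpan Φ T).comap ((sub Φ S).mulVecLin) with hWdef
  have hset : {x | (sub Φ S).mulVec x ∈ colSpan Φ T} = (W : Set _) := by
    ext x
    simp [hWdef, Submodule.mem_comap, Matrix.mulVecLin_apply]
  by_cases htop : W = ⊤
  · exfalso
    apply core Φ μ hμ hcol hcoh S T htμ hδ
    intro j hj
    have hx : Pi.single (⟨j, hj⟩ : {j // j ∈ S}) (1 : ℂ) ∈ W := by
      rw [htop]; exact Submodule.mem_top
    have hcolv : (sub Φ S).mulVec (Pi.single (⟨j, hj⟩ : {j // j ∈ S}) (1 : ℂ))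
        = col Φ j := by
      ext i
      rw [Matrix.mulVec_single]
      simp [sub, col]
    rw [hWdef, Submodule.mem_comap, Matrix.mulVecLin_apply, hcolv] at hx
    exact hx
  · rw [hset]
    refine hac ?_
    have hne : W.restrictScalars ℝ ≠ ⊤ := by
      intro h
      exact htop (Submodule.restrictScalars_injective ℝ _ _
        (by rw [h, Submodule.restrictScalars_top]))
    have h0 := Measure.addHaar_submodule
      (volume : Measure ({j // j ∈ S} → ℂ)) (W.restrictScalars ℝ) hne
    exact h0


end SparsityGap
end
end

section
/- Let Φ be an m×N complex matrix with unit-norm columns that is a tight frame with ‖Φ‖² = N/m. Let S index a linearly independent family of columns such that ‖(Φ_SᴴΦ_S)⁻¹Φ_Sᴴ‖ ≤ √2 and max_{v ∉ S} ‖Φ_Sᴴ φ_v‖₂ ≤ 1/2. Let V be a set of column indices disjoint from S and set R = S ∪ V. Then rank(Φ_R) ≥ |S| + m·|V|/(2N). -/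
noncomputable section

open Matrix MeasureTheory Finset

namespace SparsityGap

/-- The pseudoinverse `Φ_S† = (Φ_Sᴴ Φ_S)⁻¹ Φ_Sᴴ` of `Φ_S`. -/
def pinv {m N : ℕ} (Φ : Matrix (Fin m) (Fin N) ℂ) (S : Finset (Fin N)) :
    Matrix {j // j ∈ S} (Fin m) ℂ :=
  ((sub Φ S)ᴴ * sub Φ S)⁻¹ * (sub Φ S)ᴴ

/-! ### Auxiliary lemmas -/

open scoped Matrix.Norms.L2Operator ComplexOrder

set_option linter.unusedSectionVars false

section NormLemmas

variable {α β γ : Type*} [Fintype α] [Fintype β] [Fintype γ]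
  [DecidableEq α] [DecidableEq β] [DecidableEq γ]

lemma opNorm_eq_l2 (A : Matrix α β ℂ) : opNorm A = ‖A‖ := rfl

lemma enorm_eq (w : α → ℂ) : enorm w = ‖(EuclideanSpace.equiv α ℂ).symm w‖ := by
  rw [EuclideanSpace.norm_eq]; rfl

lemma enorm_nonneg' (w : α → ℂ) : 0 ≤ enorm w := Real.sqrt_nonneg _

lemma enorm_mulVec_le (A : Matrix α β ℂ) (x : β → ℂ) :
    enorm (A *ᵥ x) ≤ opNorm A * enorm x := by
  rw [opNorm_eq_l2, enorm_eq, enorm_eq]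
  simpa using A.l2_opNorm_mulVec ((EuclideanSpace.equiv β ℂ).symm x)

lemma opNorm_le_of {c : ℝ} (hc : 0 ≤ c) (A : Matrix α β ℂ)
    (h : ∀ x, enorm (A *ᵥ x) ≤ c * enorm x) : opNorm A ≤ c := by
  refine ContinuousLinearMap.opNorm_le_bound _ hc fun x => ?_
  have := h x.ofLp
  rw [enorm_eq, enorm_eq] at this
  simpa [Matrix.toEuclideanLin_apply] using this

lemma opNorm_conjT (A : Matrix α β ℂ) : opNorm Aᴴ = opNorm A := by
  rw [opNorm_eq_l2, opNorm_eq_l2]; exact A.l2_opNorm_conjTranspose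

lemma opNorm_nonneg' (A : Matrix α β ℂ) : 0 ≤ opNorm A := norm_nonneg _

/-- The square of the Euclidean norm of a vector. -/
def esq {δ : Type*} [Fintype δ] (w : δ → ℂ) : ℝ := ∑ j, ‖w j‖ ^ 2

lemma esq_nonneg (w : α → ℂ) : 0 ≤ esq w :=
  Finset.sum_nonneg fun _ _ => sq_nonneg _

lemma enorm_sq (w : α → ℂ) : enorm w ^ 2 = esq w := Real.sq_sqrt (esq_nonneg w)

lemma re_star_dotProduct_self (x : α → ℂ) : (star x ⬝ᵥ x).re = esq x := by
  simp [dotProduct, esq, Complex.sq_norm, Complex.normSq_apply]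

lemma star_dot_mulVec_self (M : Matrix α β ℂ) (x : β → ℂ) :
    star x ⬝ᵥ ((Mᴴ * M) *ᵥ x) = star (M *ᵥ x) ⬝ᵥ (M *ᵥ x) := by
  rw [← mulVec_mulVec, dotProduct_mulVec, star_mulVec]

/-- Pythagoras for a Hermitian idempotent. -/
lemma esq_sub_proj (Q : Matrix α α ℂ) (hH : Qᴴ = Q) (hI : Q * Q = Q) (φ : α → ℂ) :
    esq (φ - Q *ᵥ φ) = esq φ - esq (Q *ᵥ φ) := by
  set u := Q *ᵥ φ with hu
  have key : star u ⬝ᵥ u = star φ ⬝ᵥ u := by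
    rw [hu, star_mulVec, ← dotProduct_mulVec, mulVec_mulVec, hH, hI]
  have key2 : star u ⬝ᵥ φ = star (star φ ⬝ᵥ u) := star_dotProduct _ _
  have expand : star (φ - u) ⬝ᵥ (φ - u)
      = star φ ⬝ᵥ φ - star (star φ ⬝ᵥ u) := by
    rw [star_sub, sub_dotProduct, dotProduct_sub, dotProduct_sub, key2, ← key]; ring
  have h2 := congrArg Complex.re expand
  rw [Complex.sub_re] at h2
  rw [← re_star_dotProduct_self (φ - u), h2, re_star_dotProduct_self, Complex.star_def,
    Complex.conj_re, ← key, re_star_dotProduct_self]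

/-- Lower bound on the rank of a matrix from a lower bound on the squared
norms of its columns and an operator-norm type upper bound. -/
lemma rank_mul_ge (C : Matrix α γ ℂ) {b t : ℝ}
    (hcols : ∀ v, t ≤ esq (fun i => C i v))
    (hop : ∀ x, esq (C *ᵥ x) ≤ b * esq x) :
    (Fintype.card γ : ℝ) * t ≤ (C.rank : ℝ) * b := by
  classical
  set B := Cᴴ * C with hBdef
  have hB : B.IsHermitian := isHermitian_conjTranspose_mul_self C
  have hPSD : B.PosSemidef := posSemidef_conjTranspose_mul_self C
  -- trace of B equals the sum of the eigenvalues
  have htr : B.trace = ∑ i, ((hB.eigenvalues i : ℝ) : ℂ) := by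
    conv_lhs => rw [hB.spectral_theorem, Unitary.conjStarAlgAut_apply]
    rw [trace_mul_comm, ← mul_assoc, Unitary.coe_star_mul_self, one_mul, trace_diagonal]
    rfl
  -- trace of B is the sum of squared column norms
  have htr2 : (B.trace).re = ∑ v, esq (fun i => C i v) := by
    have ht : B.trace = ∑ v, B v v := rfl
    rw [ht, Complex.re_sum]
    refine Finset.sum_congr rfl fun v _ => ?_
    have : B v v = star (fun i => C i v) ⬝ᵥ (fun i => C i v) := by
      simp [hBdef, mul_apply, dotProduct, conjTranspose_apply]
    rw [this, re_star_dotProduct_self]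
  have hsum_eig : ∑ i, hB.eigenvalues i = ∑ v, esq (fun i => C i v) := by
    have h := congrArg Complex.re htr
    rw [htr2] at h
    rw [h, Complex.re_sum]
    simp
  -- lower bound on the sum of eigenvalues
  have hlow : (Fintype.card γ : ℝ) * t ≤ ∑ i, hB.eigenvalues i := by
    rw [hsum_eig]
    calc (Fintype.card γ : ℝ) * t = ∑ _v : γ, t := by
          rw [Finset.sum_const, nsmul_eq_mul, Finset.card_univ]
      _ ≤ ∑ v, esq (fun i => C i v) := Finset.sum_le_sum fun v _ => hcols v
  -- each eigenvalue is at most b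
  have heig : ∀ i, hB.eigenvalues i ≤ b := by
    intro i
    have h := hB.eigenvalues_eq i
    set v : γ → ℂ := ⇑(hB.eigenvectorBasis i) with hv
    have hdot : star v ⬝ᵥ (B *ᵥ v) = star (C *ᵥ v) ⬝ᵥ (C *ᵥ v) := star_dot_mulVec_self C v
    have hnv : esq v = 1 := by
      have h1 : ‖hB.eigenvectorBasis i‖ = 1 := hB.eigenvectorBasis.orthonormal.1 i
      have h2 : enorm v = ‖hB.eigenvectorBasis i‖ := by
        rw [EuclideanSpace.norm_eq]; rfl
      rw [← enorm_sq, h2, h1, one_pow]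
    calc hB.eigenvalues i = esq (C *ᵥ v) := by
          rw [h, hdot]; simpa using re_star_dotProduct_self (C *ᵥ v)
      _ ≤ b * esq v := hop v
      _ = b := by rw [hnv, mul_one]
  -- eigenvalues are nonnegative
  have heig0 : ∀ i, 0 ≤ hB.eigenvalues i := fun i => hPSD.eigenvalues_nonneg i
  -- sum of eigenvalues at most rank * b
  have hrank : C.rank = Fintype.card {i // hB.eigenvalues i ≠ 0} := by
    rw [← rank_conjTranspose_mul_self C]
    exact hB.rank_eq_card_non_zero_eigs
  have hup : ∑ i, hB.eigenvalues i ≤ (C.rank : ℝ) * b := by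
    have h1 : ∑ i, hB.eigenvalues i
        = ∑ i ∈ Finset.univ.filter (fun i => hB.eigenvalues i ≠ 0), hB.eigenvalues i :=
      (Finset.sum_filter_of_ne fun i _ h => h).symm
    rw [h1]
    calc ∑ i ∈ Finset.univ.filter (fun i => hB.eigenvalues i ≠ 0), hB.eigenvalues i
        ≤ ∑ _i ∈ Finset.univ.filter (fun i => hB.eigenvalues i ≠ 0), b :=
          Finset.sum_le_sum fun i _ => heig i
      _ = ((Finset.univ.filter (fun i => hB.eigenvalues i ≠ 0)).card : ℝ) * b := by
          rw [Finset.sum_const, nsmul_eq_mul]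
      _ = (C.rank : ℝ) * b := by rw [hrank, Fintype.card_subtype]
  linarith

end NormLemmas

section GramLemmas

variable {m N : ℕ} (Φ : Matrix (Fin m) (Fin N) ℂ) (S : Finset (Fin N))

lemma sub_mulVec_injective (hS : LinIndepOn Φ S) :
    Function.Injective (sub Φ S).mulVec :=
  Matrix.mulVec_injective_iff.mpr hS

lemma pinv_mul_sub (hS : LinIndepOn Φ S) : pinv Φ S * sub Φ S = 1 := by
  set M := sub Φ S with hM
  set G := Mᴴ * M with hG
  have hinj := sub_mulVec_injective Φ S hS
  have h0 : ∀ x, G *ᵥ x = 0 → x = 0 := by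
    intro x hx
    have h1 : star x ⬝ᵥ (G *ᵥ x) = 0 := by rw [hx, dotProduct_zero]
    rw [hG, star_dot_mulVec_self] at h1
    have h2 : M *ᵥ x = 0 := dotProduct_star_self_eq_zero.mp h1
    apply hinj
    rw [h2, mulVec_zero]
  have hGinj : Function.Injective G.mulVec := by
    intro x y hxy
    have : G *ᵥ (x - y) = 0 := by rw [mulVec_sub, hxy, sub_self]
    exact sub_eq_zero.mp (h0 _ this)
  have hGunit : IsUnit G := mulVec_injective_iff_isUnit.mp hGinj
  rw [pinv, Matrix.mul_assoc, ← hM, ← hG, Matrix.nonsing_inv_mul G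
    ((Matrix.isUnit_iff_isUnit_det G).mp hGunit)]

lemma pinv_conjT_mul : (pinv Φ S)ᴴ * (sub Φ S)ᴴ = sub Φ S * pinv Φ S := by
  set M := sub Φ S with hM
  set G := Mᴴ * M with hG
  have hGH : Gᴴ = G := isHermitian_conjTranspose_mul_self M
  have h1 : (pinv Φ S)ᴴ = M * G⁻¹ := by
    rw [pinv, conjTranspose_mul, conjTranspose_conjTranspose, conjTranspose_nonsing_inv,
      ← hM, ← hG, hGH]
  rw [h1, pinv, ← hM, ← hG, Matrix.mul_assoc]

lemma projQ_conjT : (sub Φ S * pinv Φ S)ᴴ = sub Φ S * pinv Φ S := by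
  rw [conjTranspose_mul, pinv_conjT_mul]

lemma projQ_idem (hS : LinIndepOn Φ S) :
    (sub Φ S * pinv Φ S) * (sub Φ S * pinv Φ S) = sub Φ S * pinv Φ S := by
  rw [Matrix.mul_assoc, ← Matrix.mul_assoc (pinv Φ S), pinv_mul_sub Φ S hS, Matrix.one_mul]

lemma opNorm_sub_le (T : Finset (Fin N)) : opNorm (sub Φ T) ≤ opNorm Φ := by
  classical
  refine opNorm_le_of (opNorm_nonneg' Φ) _ fun x => ?_
  set xe : Fin N → ℂ := fun j => if h : j ∈ T then x ⟨j, h⟩ else 0 with hxe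
  have h1 : sub Φ T *ᵥ x = Φ *ᵥ xe := by
    funext i
    show ∑ a : {j // j ∈ T}, Φ i (a : Fin N) * x a = ∑ j, Φ i j * xe j
    rw [← Finset.sum_subset (Finset.subset_univ T)
      (fun j _ hj => by simp [hxe, hj])]
    rw [← Finset.sum_attach T (fun j => Φ i j * xe j), Finset.univ_eq_attach]
    refine Finset.sum_congr rfl fun a _ => ?_
    simp [hxe, a.2]
  have h2 : enorm xe = enorm x := by
    unfold enorm
    congr 1
    show ∑ j, ‖xe j‖ ^ 2 = ∑ a : {j // j ∈ T}, ‖x a‖ ^ 2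
    rw [← Finset.sum_subset (Finset.subset_univ T)
      (fun j _ hj => by simp [hxe, hj])]
    rw [← Finset.sum_attach T (fun j => ‖xe j‖ ^ 2), Finset.univ_eq_attach]
    refine Finset.sum_congr rfl fun a _ => ?_
    simp [hxe, a.2]
  rw [h1, ← h2]
  exact enorm_mulVec_le Φ xe

/-- Splitting the rank of `Φ_{S ∪ V}` using an annihilator `P` of the columns in `S`. -/
lemma rank_split (V : Finset (Fin N)) (hS : LinIndepOn Φ S)
    (P : Matrix (Fin m) (Fin m) ℂ)
    (hPS : ∀ j ∈ S, P *ᵥ col Φ j = 0) :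
    S.card + (P * sub Φ V).rank ≤ (sub Φ (S ∪ V)).rank := by
  classical
  set W := LinearMap.range (sub Φ (S ∪ V)).mulVecLin with hW
  have hWspan : W = colSpan Φ (S ∪ V) := by
    rw [hW, Matrix.range_mulVecLin]; rfl
  set f : W →ₗ[ℂ] (Fin m → ℂ) := P.mulVecLin ∘ₗ W.subtype with hf
  have hrn : Module.finrank ℂ (LinearMap.range f) + Module.finrank ℂ (LinearMap.ker f)
      = Module.finrank ℂ W := LinearMap.finrank_range_add_finrank_ker f
  have hcolW : ∀ j, j ∈ S ∪ V → col Φ j ∈ W := by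
    intro j hj
    rw [hWspan]
    exact Submodule.subset_span ⟨⟨j, hj⟩, rfl⟩
  have h1 : (P * sub Φ V).rank ≤ Module.finrank ℂ (LinearMap.range f) := by
    refine Submodule.finrank_mono ?_
    rintro y ⟨x, rfl⟩
    have hmem : (sub Φ V) *ᵥ x ∈ W := by
      rw [hWspan]
      have hsub : colSpan Φ V ≤ colSpan Φ (S ∪ V) := by
        refine Submodule.span_mono ?_
        rintro _ ⟨j, rfl⟩
        exact ⟨⟨(j : Fin N), Finset.mem_union_right _ j.2⟩, rfl⟩
      refine hsub ?_
      have : (sub Φ V) *ᵥ x ∈ LinearMap.range (sub Φ V).mulVecLin := ⟨x, rfl⟩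
      rwa [Matrix.range_mulVecLin] at this
    refine ⟨⟨(sub Φ V) *ᵥ x, hmem⟩, ?_⟩
    show P *ᵥ ((sub Φ V) *ᵥ x) = (P * sub Φ V).mulVecLin x
    rw [mulVec_mulVec]; rfl
  have h2 : S.card ≤ Module.finrank ℂ (LinearMap.ker f) := by
    have hsub : colSpan Φ S ≤ (LinearMap.ker f).map W.subtype := by
      rw [colSpan]
      refine Submodule.span_le.mpr ?_
      rintro _ ⟨j, rfl⟩
      refine ⟨⟨col Φ (j : Fin N), hcolW _ (Finset.mem_union_left _ j.2)⟩, ?_, rfl⟩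
      show f _ = 0
      have : f ⟨col Φ (j : Fin N), hcolW _ (Finset.mem_union_left _ j.2)⟩
          = P *ᵥ col Φ (j : Fin N) := rfl
      rw [this, hPS _ j.2]
    have hcard : Module.finrank ℂ (colSpan Φ S) = S.card := by
      rw [colSpan, finrank_span_eq_card hS, Fintype.card_coe]
    calc S.card = Module.finrank ℂ (colSpan Φ S) := hcard.symm
      _ ≤ Module.finrank ℂ ((LinearMap.ker f).map W.subtype) := Submodule.finrank_mono hsub
      _ = Module.finrank ℂ (LinearMap.ker f) := Submodule.finrank_map_subtype_eq _ _
  have hWrank : (sub Φ (S ∪ V)).rank = Module.finrank ℂ W := rfl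
  omega

end GramLemmas

/-- Corollary 18.  Suppose `Φ` has unit-norm columns and is
a tight frame (`‖Φ‖² = N/m`).  Let `S` index a linearly independent family of
columns with `‖Φ_S†‖ ≤ √2` and `max_{v ∉ S} ‖Φ_Sᴴ φ_v‖₂ ≤ 1/2`, and let `V`
be disjoint from `S` with `R = S ∪ V`.  Then
`rank(Φ_R) ≥ |S| + m|V|/(2N)`. -/
theorem rank_union_ge_weak_incoherence {m N : ℕ}
    (Φ : Matrix (Fin m) (Fin N) ℂ) (hcol : UnitColumns Φ)
    (htight : opNorm Φ ^ 2 = (N : ℝ) / m)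
    (S : Finset (Fin N)) (hS : LinIndepOn Φ S)
    (hpinv : opNorm (pinv Φ S) ≤ Real.sqrt 2)
    (hmax : ∀ v ∉ S, enorm ((sub Φ S)ᴴ.mulVec (col Φ v)) ≤ 1 / 2)
    (V : Finset (Fin N)) (hSV : Disjoint S V) :
    (S.card : ℝ) + (m : ℝ) * (V.card : ℝ) / (2 * N) ≤
      ((sub Φ (S ∪ V)).rank : ℝ) := by
  classical
  rcases Nat.eq_zero_or_pos N with hN | hN
  · subst hN
    have hS0 : S = ∅ := Finset.eq_empty_of_forall_notMem fun x _ => x.elim0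
    have hV0 : V = ∅ := Finset.eq_empty_of_forall_notMem fun x _ => x.elim0
    subst hS0; subst hV0
    simp
  have hm : 0 < m := by
    rcases Nat.eq_zero_or_pos m with hm0 | hm0
    · exfalso
      have := hcol ⟨0, hN⟩
      subst hm0
      simpa using this
    · exact hm0
  have hNr : (0 : ℝ) < N := by exact_mod_cast hN
  have hmr : (0 : ℝ) < m := by exact_mod_cast hm
  -- projection setup
  have hpinvM := pinv_mul_sub Φ S hS
  set Q := sub Φ S * pinv Φ S with hQdef
  have hQH : Qᴴ = Q := projQ_conjT Φ S
  have hQQ : Q * Q = Q := projQ_idem Φ S hS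
  set P := (1 : Matrix (Fin m) (Fin m) ℂ) - Q with hPdef
  have hPS : ∀ j ∈ S, P *ᵥ col Φ j = 0 := by
    intro j hj
    have hcolM : col Φ j = sub Φ S *ᵥ Pi.single ⟨j, hj⟩ 1 := by
      funext i
      simp [sub, col, Matrix.mulVec_single]
    rw [hcolM, mulVec_mulVec, hPdef, Matrix.sub_mul, Matrix.one_mul, hQdef,
      Matrix.mul_assoc, hpinvM, Matrix.mul_one, sub_self, zero_mulVec]
  have hsplit := rank_split Φ S V hS P hPS
  -- P has operator norm at most 1
  have hPH : Pᴴ = P := by rw [hPdef, conjTranspose_sub, conjTranspose_one, hQH]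
  have hPP : P * P = P := by
    rw [hPdef, sub_mul, one_mul, mul_sub, mul_one, hQQ, sub_self, sub_zero]
  have hPnorm : opNorm P ≤ 1 := by
    have h := P.l2_opNorm_conjTranspose_mul_self
    rw [hPH, hPP] at h
    have h' : opNorm P = opNorm P * opNorm P := by rw [opNorm_eq_l2]; exact h
    nlinarith [opNorm_nonneg' P]
  -- each column of P * Φ_V has squared norm at least 1/2
  set C := P * sub Φ V with hCdef
  have hhalf : ∀ v : {j // j ∈ V}, (1 : ℝ) / 2 ≤ esq (fun i => C i v) := by
    intro v
    have hvS : (v : Fin N) ∉ S := fun h => (Finset.disjoint_left.mp hSV h) v.2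
    have hcolC : (fun i => C i v) = P *ᵥ col Φ (v : Fin N) := by
      funext i
      simp [hCdef, mul_apply, mulVec, dotProduct, sub, col]
    rw [hcolC]
    have hPv : P *ᵥ col Φ (v : Fin N) = col Φ (v : Fin N) - Q *ᵥ col Φ (v : Fin N) := by
      rw [hPdef, sub_mulVec, one_mulVec]
    rw [hPv, esq_sub_proj Q hQH hQQ]
    have h1 : esq (col Φ (v : Fin N)) = 1 := hcol (v : Fin N)
    have h2 : esq (Q *ᵥ col Φ (v : Fin N)) ≤ 1 / 2 := by
      have hfact : Q *ᵥ col Φ (v : Fin N)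
          = (pinv Φ S)ᴴ *ᵥ ((sub Φ S)ᴴ *ᵥ col Φ (v : Fin N)) := by
        rw [mulVec_mulVec, pinv_conjT_mul, hQdef]
      have hb := enorm_mulVec_le (pinv Φ S)ᴴ ((sub Φ S)ᴴ *ᵥ col Φ (v : Fin N))
      have hmaxv := hmax (v : Fin N) hvS
      have henorm : enorm (Q *ᵥ col Φ (v : Fin N)) ≤ Real.sqrt 2 * (1 / 2) := by
        rw [hfact]
        refine hb.trans ?_
        rw [opNorm_conjT]
        exact mul_le_mul hpinv hmaxv (enorm_nonneg' _) (Real.sqrt_nonneg 2)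
      have hsq := pow_le_pow_left₀ (enorm_nonneg' _) henorm 2
      rw [enorm_sq] at hsq
      refine hsq.trans ?_
      rw [mul_pow, Real.sq_sqrt (by norm_num : (0:ℝ) ≤ 2)]
      norm_num
    linarith
  -- operator bound for C
  have hopC : ∀ x, esq (C *ᵥ x) ≤ ((N : ℝ) / m) * esq x := by
    intro x
    have h1 : enorm (C *ᵥ x) ≤ opNorm Φ * enorm x := by
      calc enorm (C *ᵥ x) ≤ opNorm C * enorm x := enorm_mulVec_le _ _
        _ ≤ (opNorm P * opNorm (sub Φ V)) * enorm x := by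
            refine mul_le_mul_of_nonneg_right ?_ (enorm_nonneg' _)
            rw [opNorm_eq_l2, opNorm_eq_l2, opNorm_eq_l2]
            exact P.l2_opNorm_mul (sub Φ V)
        _ ≤ (1 * opNorm Φ) * enorm x := by
            refine mul_le_mul_of_nonneg_right ?_ (enorm_nonneg' _)
            exact mul_le_mul hPnorm (opNorm_sub_le Φ V) (opNorm_nonneg' _) zero_le_one
        _ = opNorm Φ * enorm x := by rw [one_mul]
    have h2 := pow_le_pow_left₀ (enorm_nonneg' _) h1 2
    rwa [enorm_sq, mul_pow, htight, enorm_sq] at h2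
  have hmain := rank_mul_ge C hhalf hopC
  rw [Fintype.card_coe] at hmain
  -- conclude
  have hsplitR : (S.card : ℝ) + (C.rank : ℝ) ≤ ((sub Φ (S ∪ V)).rank : ℝ) := by
    exact_mod_cast hsplit
  have hfin : (m : ℝ) * (V.card : ℝ) / (2 * N) ≤ (C.rank : ℝ) := by
    rw [div_le_iff₀ (by positivity)]
    have h2 : (V.card : ℝ) * (1 / 2) * m ≤ (C.rank : ℝ) * ((N : ℝ) / m) * m :=
      mul_le_mul_of_nonneg_right hmain hmr.le
    rw [mul_assoc ((C.rank : ℝ)), div_mul_cancel₀ _ hmr.ne'] at h2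
    nlinarith
  linarith

end SparsityGap
end
end
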